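/- G_{p,q} is an Oliver group: there exists no chain of subgroups P ⊴ H ⊴ G_{p,q} such that P and G_{p,q}/H are of prime power order (possibly trivial) and H/P is cyclic. -/

import Mathlib

open Multiplicative

namespace Mizerka

/-- The standing hypotheses: `p` and `q` are odd primes with `q ∣ p - 1`, and `i` is a
natural number with `i ≡ 1 (mod q)` whose multiplicative order modulo `p` equals `q`. -/
structure Hyp (p q i : ℕ) : Prop where
  hp : Nat.Prime p
  hq : Nat.Prime q
  hoddp : Odd p
  hoddq : Odd q
  hdvd : q ∣ p - 1
  hmod : i ≡ 1 [MOD q]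
  hord : orderOf (i : ZMod p) = q

namespace Hyp

variable {p q i : ℕ}

theorem coprime_q (h : Hyp p q i) : Nat.Coprime i q := by
  have h1 : i % q = 1 % q := h.hmod
  unfold Nat.Coprime
  rw [Nat.gcd_comm, Nat.gcd_rec, h1, ← Nat.gcd_rec, Nat.gcd_one_right]

theorem coprime_p (h : Hyp p q i) : Nat.Coprime i p := by
  haveI : NeZero p := ⟨h.hp.ne_zero⟩
  have hq1 : q - 1 + 1 = q := Nat.succ_pred_eq_of_pos h.hq.pos
  have hmul : (i : ZMod p) * (i : ZMod p) ^ (q - 1) = 1 := by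
    rw [← pow_succ', hq1, ← h.hord, pow_orderOf_eq_one]
  exact (ZMod.isUnit_iff_coprime i p).mp (IsUnit.of_mul_eq_one _ hmul)

theorem coprime (h : Hyp p q i) : Nat.Coprime i (p * q) :=
  Nat.Coprime.mul_right h.coprime_p h.coprime_q

theorem pow_q_modeq (h : Hyp p q i) : i ^ q ≡ 1 [MOD p * q] := by
  have hpq : p ≠ q := by
    have h1 : 0 < p - 1 := by have := h.hp.two_le; omega
    have := Nat.le_of_dvd h1 h.hdvd
    omega
  have hc : Nat.Coprime p q := (Nat.coprime_primes h.hp h.hq).mpr hpq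
  rw [← Nat.modEq_and_modEq_iff_modEq_mul hc]
  constructor
  · haveI : NeZero p := ⟨h.hp.ne_zero⟩
    have hcast : ((i ^ q : ℕ) : ZMod p) = ((1 : ℕ) : ZMod p) := by
      push_cast
      rw [← h.hord, pow_orderOf_eq_one]
    exact (ZMod.natCast_eq_natCast_iff _ _ _).mp hcast
  · calc i ^ q ≡ 1 ^ q [MOD q] := h.hmod.pow q
      _ = 1 := one_pow q

/-- The unit of `ZMod (p*q)` determined by `i`. -/
def unit (h : Hyp p q i) : (ZMod (p * q))ˣ := ZMod.unitOfCoprime i h.coprime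

/-- The unit of `ZMod p` determined by `i`. -/
def unitP (h : Hyp p q i) : (ZMod p)ˣ := ZMod.unitOfCoprime i h.coprime_p

theorem unit_pow (h : Hyp p q i) : h.unit ^ q = 1 := by
  apply Units.ext
  have h2 : ((i ^ q : ℕ) : ZMod (p * q)) = ((1 : ℕ) : ZMod (p * q)) :=
    (ZMod.natCast_eq_natCast_iff _ _ _).mpr h.pow_q_modeq
  push_cast at h2
  simpa [Hyp.unit] using h2

theorem unitP_pow (h : Hyp p q i) : h.unitP ^ q = 1 := by
  apply Units.ext
  have h2 : (i : ZMod p) ^ q = 1 := by rw [← h.hord]; exact pow_orderOf_eq_one _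
  simpa [Hyp.unitP] using h2

end Hyp

/-- Multiplication by a unit, as an automorphism of the (multiplicatively written)
cyclic group `ZMod n`. -/
def zmodMulAut (n : ℕ) : (ZMod n)ˣ →* MulAut (Multiplicative (ZMod n)) where
  toFun u :=
    { toFun := fun x => ofAdd ((u : ZMod n) * x.toAdd)
      invFun := fun x => ofAdd (((u⁻¹ : (ZMod n)ˣ) : ZMod n) * x.toAdd)
      left_inv := fun x => by simp
      right_inv := fun x => by simp
      map_mul' := fun x y => by simp [mul_add, ← ofAdd_add] }
  map_one' := by ext x; simp
  map_mul' u v := by ext x; simp [mul_assoc]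

/-- The function underlying the automorphism of the dihedral group induced by
multiplication by a unit on the rotation part. -/
def dihedralAutFun (n : ℕ) (u : (ZMod n)ˣ) : DihedralGroup n → DihedralGroup n
  | .r j => .r ((u : ZMod n) * j)
  | .sr j => .sr ((u : ZMod n) * j)

/-- Multiplication of indices by a unit, as an automorphism of the dihedral group:
`a ↦ a^u`, `b ↦ b`. -/
def dihedralAut (n : ℕ) : (ZMod n)ˣ →* MulAut (DihedralGroup n) where
  toFun u :=
    { toFun := dihedralAutFun n u
      invFun := dihedralAutFun n u⁻¹
      left_inv := fun x => by cases x <;> simp [dihedralAutFun]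
      right_inv := fun x => by cases x <;> simp [dihedralAutFun]
      map_mul' := fun x y => by cases x <;> cases y <;> simp [dihedralAutFun, mul_add, mul_sub] }
  map_one' := by ext x; cases x <;> simp [dihedralAutFun]
  map_mul' u v := by ext x; cases x <;> simp [dihedralAutFun, mul_assoc]

/-- The homomorphism `ZMod q →* G` (written multiplicatively) sending `1` to a fixed
element `g` with `g ^ q = 1`. -/
def zmodPow {G : Type*} [Group G] (q : ℕ) [NeZero q] (g : G) (hg : g ^ q = 1) :
    Multiplicative (ZMod q) →* G where
  toFun x := g ^ (toAdd x).val
  map_one' := by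
    show g ^ (toAdd (1 : Multiplicative (ZMod q))).val = 1
    rw [toAdd_one, ZMod.val_zero, pow_zero]
  map_mul' x y := by
    have key : ∀ m : ℕ, g ^ (m % q) = g ^ m := fun m => by
      conv_rhs => rw [← Nat.div_add_mod m q]
      rw [pow_add, pow_mul, hg, one_pow, one_mul]
    show g ^ (toAdd (x * y)).val = g ^ (toAdd x).val * g ^ (toAdd y).val
    rw [toAdd_mul, ZMod.val_add, key, pow_add]

namespace Hyp

variable {p q i : ℕ}

/-- The action of `C_q` on `C_{pq}` sending the generator to multiplication by `i`. -/
def phiN (h : Hyp p q i) : Multiplicative (ZMod q) →* MulAut (Multiplicative (ZMod (p * q))) :=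
  haveI : NeZero q := ⟨h.hq.ne_zero⟩
  zmodPow q (zmodMulAut (p * q) h.unit) (by rw [← map_pow, h.unit_pow, map_one])

/-- The action of `C_q` on `D_{2pq}` sending the generator to `τ` (`τ(a) = a^i`, `τ(b) = b`). -/
def phiG (h : Hyp p q i) : Multiplicative (ZMod q) →* MulAut (DihedralGroup (p * q)) :=
  haveI : NeZero q := ⟨h.hq.ne_zero⟩
  zmodPow q (dihedralAut (p * q) h.unit) (by rw [← map_pow, h.unit_pow, map_one])

/-- The action of `C_q` on `C_p` sending the generator to multiplication by `i`. -/
def phiF (h : Hyp p q i) : Multiplicative (ZMod q) →* MulAut (Multiplicative (ZMod p)) :=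
  haveI : NeZero q := ⟨h.hq.ne_zero⟩
  zmodPow q (zmodMulAut p h.unitP) (by rw [← map_pow, h.unitP_pow, map_one])

end Hyp

/-- The group `N_{pq²} = ⟨a, c ∣ a^{pq} = c^q = 1, c a c⁻¹ = a^i⟩ = C_{pq} ⋊ C_q`. -/
abbrev Npq2 {p q i : ℕ} (h : Hyp p q i) : Type :=
  Multiplicative (ZMod (p * q)) ⋊[h.phiN] Multiplicative (ZMod q)

/-- The group `G_{p,q} = D_{2pq} ⋊_φ C_q`. -/
abbrev Gpq {p q i : ℕ} (h : Hyp p q i) : Type :=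
  DihedralGroup (p * q) ⋊[h.phiG] Multiplicative (ZMod q)

/-- The Frobenius group `F_{p,q} = C_p ⋊ C_q` (the nonabelian group of order `pq`). -/
abbrev Fpq {p q i : ℕ} (h : Hyp p q i) : Type :=
  Multiplicative (ZMod p) ⋊[h.phiF] Multiplicative (ZMod q)

variable {p q i : ℕ}

/-- The generator `a` of `N_{pq²}`. -/
def aN (h : Hyp p q i) : Npq2 h := SemidirectProduct.inl (ofAdd 1)

/-- The generator `c` of `N_{pq²}`. -/
def cN (h : Hyp p q i) : Npq2 h := SemidirectProduct.inr (ofAdd 1)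

/-- The generator `a` of `G_{p,q}`. -/
def aG (h : Hyp p q i) : Gpq h := SemidirectProduct.inl (DihedralGroup.r 1)

/-- The generator `b` of `G_{p,q}`. -/
def bG (h : Hyp p q i) : Gpq h := SemidirectProduct.inl (DihedralGroup.sr 0)

/-- The generator `c` of `G_{p,q}`. -/
def cG (h : Hyp p q i) : Gpq h := SemidirectProduct.inr (ofAdd 1)

/-- The real conjugacy class `(g)^± = (g) ∪ (g⁻¹)`. -/
def realClass {G : Type*} [Group G] (g : G) : Set G := {x | IsConj g x ∨ IsConj g⁻¹ x}

/-- `N` is a normal subgroup whose quotient is an `ℓ`-group (the quotient has `ℓ`-power order,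
i.e. `N` has `ℓ`-power index). -/
def OQuot {G : Type*} [Group G] (ℓ : ℕ) (N : Subgroup G) : Prop :=
  N.Normal ∧ ∃ k : ℕ, N.index = ℓ ^ k

/-- `H` is a large subgroup of `G`: it contains `O^ℓ(G)`, the smallest normal subgroup
with `ℓ`-group quotient, for some prime `ℓ`. -/
def IsLarge {G : Type*} [Group G] (H : Subgroup G) : Prop :=
  ∃ ℓ : ℕ, Nat.Prime ℓ ∧
    ∃ N : Subgroup G, OQuot ℓ N ∧ (∀ M : Subgroup G, OQuot ℓ M → N ≤ M) ∧ N ≤ H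

section Reps

variable {k : Type*} [CommSemiring k] {G : Type*} [Group G]

/-- The subspace `V^H` of `H`-fixed vectors of a representation. -/
def fixedPts {V : Type*} [AddCommMonoid V] [Module k V]
    (ρ : Representation k G V) (H : Subgroup G) : Submodule k V where
  carrier := {v | ∀ g ∈ H, ρ g v = v}
  add_mem' := by
    intro a b ha hb g hg
    rw [map_add, ha g hg, hb g hg]
  zero_mem' := by
    intro g hg
    rw [map_zero]
  smul_mem' := by
    intro c v hv g hg
    rw [map_smul, hv g hg]

end Reps

/-- The weak gap condition for a real representation: `dim V^P ≥ 2 dim V^H` for all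
`P < H ≤ G` with `P` of prime power order. -/
def WeakGap {G : Type*} [Group G] {V : Type*} [AddCommGroup V] [Module ℝ V]
    (ρ : Representation ℝ G V) : Prop :=
  ∀ P H : Subgroup G, P < H → (∃ ℓ k : ℕ, Nat.Prime ℓ ∧ Nat.card P = ℓ ^ k) →
    2 * Module.finrank ℝ (fixedPts ρ H) ≤ Module.finrank ℝ (fixedPts ρ P)

/-- Isomorphism of real representations: an equivariant linear equivalence. -/
def RepIso {G : Type*} [Group G] {U V : Type*} [AddCommGroup U] [Module ℝ U]
    [AddCommGroup V] [Module ℝ V]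
    (ρU : Representation ℝ G U) (ρV : Representation ℝ G V) : Prop :=
  ∃ e : U ≃ₗ[ℝ] V, ∀ (g : G) (u : U), e (ρU g u) = ρV g (e u)

/-- Two real representations are `𝒫`-matched if their restrictions to every subgroup of
prime power order are isomorphic. -/
def PMatched {G : Type*} [Group G] {U V : Type*} [AddCommGroup U] [Module ℝ U]
    [AddCommGroup V] [Module ℝ V]
    (ρU : Representation ℝ G U) (ρV : Representation ℝ G V) : Prop :=
  ∀ P : Subgroup G, (∃ ℓ k : ℕ, Nat.Prime ℓ ∧ Nat.card P = ℓ ^ k) →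
    RepIso (ρU.comp P.subtype) (ρV.comp P.subtype)

/-- A bundled finite-dimensional-free real representation of `G`. -/
structure RealRep (G : Type*) [Group G] where
  carrier : Type
  [acg : AddCommGroup carrier]
  [mod : Module ℝ carrier]
  rho : Representation ℝ G carrier

attribute [instance] RealRep.acg RealRep.mod

theorem dihedralAut_pow_r (n : ℕ) (u : (ZMod n)ˣ) (k : ℕ) (m : ZMod n) :
    ((dihedralAut n u) ^ k) (DihedralGroup.r m)
      = DihedralGroup.r (((u ^ k : (ZMod n)ˣ) : ZMod n) * m) := by
  induction k generalizing m with
  | zero => simp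
  | succ k ih =>
    rw [pow_succ, MulAut.mul_apply]
    have h1 : (dihedralAut n u) (DihedralGroup.r m) = DihedralGroup.r ((u : ZMod n) * m) := rfl
    rw [h1, ih, pow_succ, Units.val_mul, mul_assoc]

theorem Hyp.phiG_r (h : Hyp p q i) (z : Multiplicative (ZMod q)) (m : ZMod (p * q)) :
    h.phiG z (DihedralGroup.r m)
      = DihedralGroup.r (((h.unit ^ (toAdd z).val : (ZMod (p * q))ˣ) : ZMod (p * q)) * m) := by
  have h1 : h.phiG z = (dihedralAut (p * q) h.unit) ^ (toAdd z).val := rfl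
  rw [h1, dihedralAut_pow_r]

theorem r_inv (n : ℕ) (m : ZMod n) : (DihedralGroup.r m)⁻¹ = DihedralGroup.r (-m) := rfl

/-- The subgroup `N_{pq²} = {(aˡ, cᵐ)}` of `G_{p,q}`. -/
def NSub (h : Hyp p q i) : Subgroup (Gpq h) where
  carrier := {x | ∃ l : ZMod (p * q), x.left = DihedralGroup.r l}
  one_mem' := ⟨0, rfl⟩
  mul_mem' := by
    rintro x y ⟨lx, hx⟩ ⟨ly, hy⟩
    refine ⟨lx + (h.unit ^ (toAdd x.right).val : (ZMod (p * q))ˣ) * ly, ?_⟩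
    rw [SemidirectProduct.mul_left, hx, hy, h.phiG_r, DihedralGroup.r_mul_r]
  inv_mem' := by
    rintro x ⟨lx, hx⟩
    refine ⟨-((h.unit ^ (toAdd x.right⁻¹).val : (ZMod (p * q))ˣ) * lx), ?_⟩
    rw [SemidirectProduct.inv_left, hx, r_inv, h.phiG_r]
    congr 1
    ring

/-- The subgroup `N_{2pq} = {(bᵉaˡ, 1)} ≅ D_{2pq}` of `G_{p,q}`. -/
def N2pqSub (h : Hyp p q i) : Subgroup (Gpq h) :=
  MonoidHom.ker SemidirectProduct.rightHom

/-- The subgroup `N¹_{pq} = {(aˡ, 1)}` of `G_{p,q}`. -/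
def NpqOneSub (h : Hyp p q i) : Subgroup (Gpq h) where
  carrier := {x | x.right = 1 ∧ ∃ l : ZMod (p * q), x.left = DihedralGroup.r l}
  one_mem' := ⟨rfl, 0, rfl⟩
  mul_mem' := by
    rintro x y ⟨hx1, lx, hx⟩ ⟨hy1, ly, hy⟩
    refine ⟨by rw [SemidirectProduct.mul_right, hx1, hy1, mul_one],
      lx + (h.unit ^ (toAdd x.right).val : (ZMod (p * q))ˣ) * ly, ?_⟩
    rw [SemidirectProduct.mul_left, hx, hy, h.phiG_r, DihedralGroup.r_mul_r]
  inv_mem' := by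
    rintro x ⟨hx1, lx, hx⟩
    refine ⟨by rw [SemidirectProduct.inv_right, hx1, inv_one],
      -((h.unit ^ (toAdd x.right⁻¹).val : (ZMod (p * q))ˣ) * lx), ?_⟩
    rw [SemidirectProduct.inv_left, hx, r_inv, h.phiG_r]
    congr 1
    ring

/-- The subgroup `N²_{pq} = {(a^{qs}, cᵐ)}` of `G_{p,q}`. -/
def NpqTwoSub (h : Hyp p q i) : Subgroup (Gpq h) where
  carrier := {x | ∃ s : ZMod (p * q), x.left = DihedralGroup.r ((q : ZMod (p * q)) * s)}
  one_mem' := ⟨0, by rw [mul_zero]; rfl⟩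
  mul_mem' := by
    rintro x y ⟨sx, hx⟩ ⟨sy, hy⟩
    refine ⟨sx + (h.unit ^ (toAdd x.right).val : (ZMod (p * q))ˣ) * sy, ?_⟩
    rw [SemidirectProduct.mul_left, hx, hy, h.phiG_r, DihedralGroup.r_mul_r]
    congr 1
    ring
  inv_mem' := by
    rintro x ⟨sx, hx⟩
    refine ⟨-((h.unit ^ (toAdd x.right⁻¹).val : (ZMod (p * q))ˣ) * sx), ?_⟩
    rw [SemidirectProduct.inv_left, hx, r_inv, h.phiG_r]
    congr 1
    ring

/-- The subgroup `N_p = {(a^{qs}, 1)}` of `G_{p,q}`. -/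
def NpSub (h : Hyp p q i) : Subgroup (Gpq h) where
  carrier := {x | x.right = 1 ∧ ∃ s : ZMod (p * q), x.left = DihedralGroup.r ((q : ZMod (p * q)) * s)}
  one_mem' := ⟨rfl, 0, by rw [mul_zero]; rfl⟩
  mul_mem' := by
    rintro x y ⟨hx1, sx, hx⟩ ⟨hy1, sy, hy⟩
    refine ⟨by rw [SemidirectProduct.mul_right, hx1, hy1, mul_one],
      sx + (h.unit ^ (toAdd x.right).val : (ZMod (p * q))ˣ) * sy, ?_⟩
    rw [SemidirectProduct.mul_left, hx, hy, h.phiG_r, DihedralGroup.r_mul_r]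
    congr 1
    ring
  inv_mem' := by
    rintro x ⟨hx1, sx, hx⟩
    refine ⟨by rw [SemidirectProduct.inv_right, hx1, inv_one],
      -((h.unit ^ (toAdd x.right⁻¹).val : (ZMod (p * q))ˣ) * sx), ?_⟩
    rw [SemidirectProduct.inv_left, hx, r_inv, h.phiG_r]
    congr 1
    ring

/-- The subgroup `N_q = {(a^{ps}, 1)}` of `G_{p,q}`. -/
def NqSub (h : Hyp p q i) : Subgroup (Gpq h) where
  carrier := {x | x.right = 1 ∧ ∃ s : ZMod (p * q), x.left = DihedralGroup.r ((p : ZMod (p * q)) * s)}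
  one_mem' := ⟨rfl, 0, by rw [mul_zero]; rfl⟩
  mul_mem' := by
    rintro x y ⟨hx1, sx, hx⟩ ⟨hy1, sy, hy⟩
    refine ⟨by rw [SemidirectProduct.mul_right, hx1, hy1, mul_one],
      sx + (h.unit ^ (toAdd x.right).val : (ZMod (p * q))ˣ) * sy, ?_⟩
    rw [SemidirectProduct.mul_left, hx, hy, h.phiG_r, DihedralGroup.r_mul_r]
    congr 1
    ring
  inv_mem' := by
    rintro x ⟨hx1, sx, hx⟩
    refine ⟨by rw [SemidirectProduct.inv_right, hx1, inv_one],
      -((h.unit ^ (toAdd x.right⁻¹).val : (ZMod (p * q))ˣ) * sx), ?_⟩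
    rw [SemidirectProduct.inv_left, hx, r_inv, h.phiG_r]
    congr 1
    ring

end Mizerka

namespace Mizerka

section Aux

instance sdFinite {N G : Type*} [Group N] [Group G] {φ : G →* MulAut N}
    [Finite N] [Finite G] : Finite (N ⋊[φ] G) :=
  Finite.of_equiv (N × G)
    ⟨fun x => ⟨x.1, x.2⟩, fun x => (x.left, x.right), fun _ => rfl, fun _ => rfl⟩

theorem sd_card {N G : Type*} [Group N] [Group G] (φ : G →* MulAut N) :
    Nat.card (N ⋊[φ] G) = Nat.card N * Nat.card G := by
  rw [← Nat.card_prod]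
  exact Nat.card_congr ⟨fun x => (x.left, x.right), fun x => ⟨x.1, x.2⟩, fun _ => rfl, fun _ => rfl⟩

variable {p q i : ℕ}

theorem Hyp.p_ne_q (h : Hyp p q i) : p ≠ q := by
  have h1 : 0 < p - 1 := by have := h.hp.two_le; omega
  have := Nat.le_of_dvd h1 h.hdvd
  omega

theorem card_Gpq (h : Hyp p q i) : Nat.card (Gpq h) = 2 * (p * q) * q := by
  rw [sd_card, DihedralGroup.nat_card, Nat.card_congr Multiplicative.toAdd, Nat.card_zmod]

theorem aG_pow (h : Hyp p q i) (n : ℕ) :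
    aG h ^ n = SemidirectProduct.inl (DihedralGroup.r (n : ZMod (p * q))) := by
  rw [aG, ← map_pow, DihedralGroup.r_one_pow]

theorem inl_r_eq (h : Hyp p q i) (l : ZMod (p * q)) :
    (SemidirectProduct.inl (DihedralGroup.r l) : Gpq h) = aG h ^ l.val := by
  haveI : NeZero (p * q) := ⟨Nat.mul_ne_zero h.hp.ne_zero h.hq.ne_zero⟩
  rw [aG_pow, ZMod.natCast_val, ZMod.cast_id]

theorem cG_pow (h : Hyp p q i) (n : ℕ) :
    cG h ^ n = SemidirectProduct.inr (ofAdd (n : ZMod q)) := by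
  rw [cG, ← map_pow]
  congr 1
  rw [← ofAdd_nsmul, nsmul_eq_mul, mul_one]

theorem inr_eq (h : Hyp p q i) (z : Multiplicative (ZMod q)) :
    (SemidirectProduct.inr z : Gpq h) = cG h ^ (toAdd z).val := by
  haveI : NeZero q := ⟨h.hq.ne_zero⟩
  rw [cG_pow, ZMod.natCast_val, ZMod.cast_id, ofAdd_toAdd]

theorem zq_pow (h : Hyp p q i) (z : Multiplicative (ZMod q)) : z ^ q = 1 := by
  rw [← ofAdd_toAdd z, ← ofAdd_nsmul, nsmul_eq_mul, ZMod.natCast_self, zero_mul, ofAdd_zero]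

theorem orderOf_aG (h : Hyp p q i) : orderOf (aG h) = p * q := by
  rw [aG, orderOf_injective _ SemidirectProduct.inl_injective, DihedralGroup.orderOf_r_one]

theorem mk_pow (h : Hyp p q i) (l : ZMod (p * q)) (z : Multiplicative (ZMod q)) (n : ℕ) :
    (⟨DihedralGroup.r l, z⟩ : Gpq h) ^ n =
      ⟨DihedralGroup.r (l * ∑ j ∈ Finset.range n,
        ((h.unit ^ (toAdd z).val : (ZMod (p * q))ˣ) : ZMod (p * q)) ^ j), z ^ n⟩ := by
  induction n with
  | zero => ext <;> simp [-DihedralGroup.r_zero, DihedralGroup.one_def]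
  | succ n ih =>
    rw [pow_succ', ih]
    ext
    · show DihedralGroup.r l * h.phiG z (DihedralGroup.r _) = DihedralGroup.r _
      rw [h.phiG_r, DihedralGroup.r_mul_r, geom_sum_succ]
      congr 1
      ring
    · show z * z ^ n = z ^ (n + 1)
      rw [pow_succ']

theorem exists_q_mul (h : Hyp p q i) (x : ZMod (p * q))
    (hx : ZMod.castHom (dvd_mul_left q p) (ZMod q) x = 0) :
    ∃ t : ZMod (p * q), x = (q : ZMod (p * q)) * t := by
  haveI : NeZero q := ⟨h.hq.ne_zero⟩
  haveI : NeZero (p * q) := ⟨Nat.mul_ne_zero h.hp.ne_zero h.hq.ne_zero⟩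
  have h1 : ((x.val : ℕ) : ZMod q) = 0 := by
    rw [ZMod.natCast_val]
    exact hx
  obtain ⟨t, ht⟩ := (ZMod.natCast_eq_zero_iff _ _).mp h1
  refine ⟨(t : ZMod (p * q)), ?_⟩
  have h2 : ((x.val : ℕ) : ZMod (p * q)) = x := by rw [ZMod.natCast_val, ZMod.cast_id]
  rw [← h2, ht]
  push_cast
  ring

theorem sum_cast (h : Hyp p q i) (z : Multiplicative (ZMod q)) :
    ZMod.castHom (dvd_mul_left q p) (ZMod q) (∑ j ∈ Finset.range q,
      ((h.unit ^ (toAdd z).val : (ZMod (p * q))ˣ) : ZMod (p * q)) ^ j) = 0 := by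
  haveI : NeZero q := ⟨h.hq.ne_zero⟩
  have hiq : ((i : ℕ) : ZMod q) = 1 := by
    have := (ZMod.natCast_eq_natCast_iff i 1 q).mpr h.hmod
    rwa [Nat.cast_one] at this
  have hu : ZMod.castHom (dvd_mul_left q p) (ZMod q) ((h.unit : ZMod (p * q))) = 1 := by
    rw [Hyp.unit, ZMod.coe_unitOfCoprime, map_natCast, hiq]
  rw [map_sum]
  have hterm : ∀ j ∈ Finset.range q, ZMod.castHom (dvd_mul_left q p) (ZMod q)
      (((h.unit ^ (toAdd z).val : (ZMod (p * q))ˣ) : ZMod (p * q)) ^ j) = 1 := by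
    intro j _
    rw [Units.val_pow_eq_pow_val, map_pow, map_pow, hu, one_pow, one_pow]
  rw [Finset.sum_congr rfl hterm, Finset.sum_const, Finset.card_range, nsmul_eq_mul, mul_one,
    ZMod.natCast_self]

theorem pow_q_inl (h : Hyp p q i) (l : ZMod (p * q)) (z : Multiplicative (ZMod q)) :
    ∃ t : ZMod (p * q), (⟨DihedralGroup.r l, z⟩ : Gpq h) ^ q =
      SemidirectProduct.inl (DihedralGroup.r ((q : ZMod (p * q)) * t)) := by
  obtain ⟨t, ht⟩ := exists_q_mul h (l * ∑ j ∈ Finset.range q,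
      ((h.unit ^ (toAdd z).val : (ZMod (p * q))ˣ) : ZMod (p * q)) ^ j)
    (by rw [map_mul, sum_cast h, mul_zero])
  refine ⟨t, ?_⟩
  rw [mk_pow, ht, zq_pow h]
  ext <;> rfl

theorem comm_ca (h : Hyp p q i) :
    cG h * aG h * (cG h)⁻¹ * (aG h)⁻¹ =
      SemidirectProduct.inl (DihedralGroup.r ((i : ZMod (p * q)) - 1)) := by
  haveI : Fact (1 < q) := ⟨h.hq.one_lt⟩
  have h1 : (SemidirectProduct.inl (h.phiG (ofAdd 1) (DihedralGroup.r 1)) : Gpq h)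
      = cG h * aG h * (cG h)⁻¹ := by
    rw [cG, aG, ← map_inv]
    exact SemidirectProduct.inl_aut _ _
  rw [← h1, aG, ← map_inv, ← map_mul]
  congr 1
  rw [h.phiG_r]
  have h2 : (toAdd (ofAdd (1 : ZMod q))).val = 1 := by
    rw [toAdd_ofAdd, ZMod.val_one]
  rw [h2, pow_one]
  have h3 : ((h.unit : ZMod (p * q))) = (i : ZMod (p * q)) := ZMod.coe_unitOfCoprime _ _
  rw [h3, mul_one, r_inv, DihedralGroup.r_mul_r, sub_eq_add_neg]

theorem comm_ab (h : Hyp p q i) :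
    aG h * bG h * (aG h)⁻¹ * (bG h)⁻¹ = aG h ^ 2 := by
  have hsr : ((DihedralGroup.sr (0 : ZMod (p * q)))⁻¹ : DihedralGroup (p * q))
      = DihedralGroup.sr 0 := rfl
  rw [aG, bG, ← map_inv, ← map_inv, ← map_mul, ← map_mul, ← map_mul, ← map_pow]
  congr 1
  rw [r_inv, hsr, DihedralGroup.r_mul_sr, DihedralGroup.sr_mul_r, DihedralGroup.sr_mul_sr]
  have : ((DihedralGroup.r 1 : DihedralGroup (p * q)) ^ 2) = DihedralGroup.r 2 := by
    rw [pow_two, DihedralGroup.r_mul_r, one_add_one_eq_two]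
  rw [this]
  congr 1
  ring

theorem i_sub_one (h : Hyp p q i) :
    ∃ s : ZMod (p * q), (i : ZMod (p * q)) - 1 = (q : ZMod (p * q)) * s := by
  apply exists_q_mul h
  have hiq : ((i : ℕ) : ZMod q) = 1 := by
    have := (ZMod.natCast_eq_natCast_iff i 1 q).mpr h.hmod
    rwa [Nat.cast_one] at this
  rw [map_sub, map_natCast, hiq, map_one, sub_self]

theorem i_sub_one_ne (h : Hyp p q i) : ((i : ZMod (p * q)) - 1) ≠ 0 := by
  intro hc
  have h1 : (i : ZMod (p * q)) = 1 := by linear_combination hc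
  have h2 : ((i : ℕ) : ZMod p) = 1 := by
    have := congrArg (ZMod.castHom (dvd_mul_right p q) (ZMod p)) h1
    rwa [map_natCast, map_one] at this
  have h3 : orderOf ((i : ℕ) : ZMod p) = 1 := by rw [h2, orderOf_one]
  rw [h.hord] at h3
  exact h.hq.one_lt.ne' h3

theorem r_pow_eq {n : ℕ} [NeZero n] (x : ZMod n) (m : ℕ) :
    (DihedralGroup.r x) ^ m = DihedralGroup.r ((m : ZMod n) * x) := by
  have h1 : DihedralGroup.r x = (DihedralGroup.r 1 : DihedralGroup n) ^ x.val := by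
    rw [DihedralGroup.r_one_pow, ZMod.natCast_val, ZMod.cast_id]
  rw [h1, ← pow_mul, DihedralGroup.r_one_pow]
  congr 1
  push_cast
  rw [ZMod.natCast_val, ZMod.cast_id]
  ring

theorem orderOf_g0 (h : Hyp p q i) :
    orderOf (SemidirectProduct.inl (DihedralGroup.r ((i : ZMod (p * q)) - 1)) : Gpq h) = p := by
  haveI : NeZero (p * q) := ⟨Nat.mul_ne_zero h.hp.ne_zero h.hq.ne_zero⟩
  haveI : Fact (Nat.Prime p) := ⟨h.hp⟩
  apply orderOf_eq_prime
  · obtain ⟨s, hs⟩ := i_sub_one h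
    rw [← map_pow, r_pow_eq, hs]
    have : (p : ZMod (p * q)) * ((q : ZMod (p * q)) * s) = 0 := by
      have h0 : ((p * q : ℕ) : ZMod (p * q)) = 0 := ZMod.natCast_self _
      push_cast at h0
      rw [← mul_assoc, h0, zero_mul]
    rw [this]
    rfl
  · intro hc
    apply i_sub_one_ne h
    have h1 := congrArg SemidirectProduct.left hc
    simpa [-DihedralGroup.r_zero, DihedralGroup.one_def] using h1

end Aux

end Mizerka

open Mizerka in
/-- `G_{p,q}` is an Oliver group: there is no chain `P ⊴ H ⊴ G_{p,q}` with
`P` and `G_{p,q}/H` of prime power order (possibly trivial) and `H/P` cyclic. -/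
theorem statement_19 {p q i : ℕ} (h : Hyp p q i) :
    ¬ ∃ (H : Subgroup (Gpq h)) (P : Subgroup ↥H),
      H.Normal ∧
      (∃ ℓ k : ℕ, Nat.Prime ℓ ∧ Nat.card P = ℓ ^ k) ∧
      (∃ ℓ k : ℕ, Nat.Prime ℓ ∧ H.index = ℓ ^ k) ∧
      (∃ hP : P.Normal, haveI := hP; IsCyclic (↥H ⧸ P)) := by
  rintro ⟨H, P, hHn, ⟨ℓ, k, hℓ, hPcard⟩, ⟨ℓ', k', hℓ', hHidx⟩, hPn, hcyc⟩
  haveI : NeZero q := ⟨h.hq.ne_zero⟩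
  haveI : NeZero (p * q) := ⟨Nat.mul_ne_zero h.hp.ne_zero h.hq.ne_zero⟩
  haveI := hHn
  haveI := hPn
  have hpq : p ≠ q := h.p_ne_q
  have hcardG : Nat.card (Gpq h) = 2 * (p * q) * q := card_Gpq h
  have horda : orderOf (aG h) = p * q := orderOf_aG h
  have hoddpq : Odd (p * q) := h.hoddp.mul h.hoddq
  have hhalf : 2 * ((p * q + 1) / 2) = p * q + 1 := by
    obtain ⟨m, hm⟩ := hoddpq; omega
  -- Case A : if both a and b lie in H we get a contradiction
  have caseA : aG h ∈ H → bG h ∈ H → False := by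
    intro ha hb
    letI := hcyc
    letI : CommGroup (↥H ⧸ P) := IsCyclic.commGroup
    set A : ↥H := ⟨aG h, ha⟩ with hA
    set B : ↥H := ⟨bG h, hb⟩ with hB
    have hcm : A * B * A⁻¹ * B⁻¹ ∈ P := by
      rw [← QuotientGroup.eq_one_iff]
      open scoped commutatorElement in show (QuotientGroup.mk' P) ⁅A, B⁆ = 1
      rw [map_commutatorElement]
      exact commutatorElement_eq_one_iff_commute.mpr (Commute.all _ _)
    have hA2 : A ^ 2 ∈ P := by
      have he : A * B * A⁻¹ * B⁻¹ = A ^ 2 := by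
        apply Subtype.ext
        show aG h * bG h * (aG h)⁻¹ * (bG h)⁻¹ = aG h ^ 2
        exact comm_ab h
      rwa [he] at hcm
    have hordA : orderOf A = p * q :=
      ((orderOf_injective H.subtype H.subtype_injective A).symm).trans horda
    have hApow : A ∈ P := by
      have hA1 : A ^ (p * q) = 1 := by
        have h0 := pow_orderOf_eq_one A
        rwa [hordA] at h0
      have h2 : A = (A ^ 2) ^ ((p * q + 1) / 2) := by
        rw [← pow_mul, hhalf, pow_succ, hA1, one_mul]
      rw [h2]
      exact pow_mem hA2 _
    have hdvd : p * q ∣ ℓ ^ k := by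
      have h0 := Subgroup.orderOf_dvd_natCard P hApow
      rwa [hordA, hPcard] at h0
    have hp' : p = ℓ := (Nat.prime_dvd_prime_iff_eq h.hp hℓ).mp
      (h.hp.dvd_of_dvd_pow (dvd_trans (dvd_mul_right p q) hdvd))
    have hq' : q = ℓ := (Nat.prime_dvd_prime_iff_eq h.hq hℓ).mp
      (h.hq.dvd_of_dvd_pow (dvd_trans (dvd_mul_left q p) hdvd))
    exact hpq (hp'.trans hq'.symm)
  rcases Nat.even_or_odd H.index with hev | hodd
  · -- even index : index = 2
    have hidx2 : H.index = 2 := by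
      have hdvdG : H.index ∣ Nat.card (Gpq h) := H.index_dvd_card
      rw [hcardG] at hdvdG
      have hℓ2 : ℓ' = 2 := by
        have h2 : 2 ∣ ℓ' ^ k' := by
          rw [← hHidx]; exact hev.two_dvd
        exact ((Nat.prime_dvd_prime_iff_eq Nat.prime_two hℓ').mp
          (Nat.prime_two.dvd_of_dvd_pow h2)).symm
      rw [hHidx, hℓ2] at hev hdvdG ⊢
      have hoddm : Odd ((p * q) * q) := hoddpq.mul h.hoddq
      obtain ⟨m, hm⟩ := hoddm
      have hk1 : k' = 1 := by
        by_contra hk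
        rcases Nat.lt_or_ge k' 1 with h1 | h1
        · interval_cases k' <;> simp_all
        · have h2 : k' ≥ 2 := by omega
          have h4 : 4 ∣ 2 ^ k' := by
            have : (2 : ℕ) ^ 2 ∣ 2 ^ k' := pow_dvd_pow 2 h2
            simpa using this
          have h5 : 4 ∣ 2 * ((p * q) * q) := by
            have he : 2 * (p * q) * q = 2 * ((p * q) * q) := by ring
            rw [he] at hdvdG
            exact h4.trans hdvdG
          omega
      rw [hk1, pow_one]
    have hcardH : Nat.card ↥H = (p * q) * q := by
      have hh := Subgroup.card_mul_index H
      rw [hidx2, hcardG] at hh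
      have h2 : 2 * (p * q) * q = ((p * q) * q) * 2 := by ring
      rw [h2] at hh
      exact Nat.eq_of_mul_eq_mul_right (by norm_num) hh
    -- a ∈ H and c ∈ H
    have haH : aG h ∈ H := by
      rw [← QuotientGroup.eq_one_iff]
      have h1 : orderOf ((QuotientGroup.mk' H) (aG h)) ∣ p * q := by
        have h0 := orderOf_map_dvd (QuotientGroup.mk' H) (aG h)
        rwa [horda] at h0
      have h2 : orderOf ((QuotientGroup.mk' H) (aG h)) ∣ 2 := by
        have h0 := orderOf_dvd_natCard ((QuotientGroup.mk' H) (aG h))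
        rwa [← Subgroup.index_eq_card, hidx2] at h0
      rw [← orderOf_eq_one_iff]
      rcases (Nat.dvd_prime Nat.prime_two).mp h2 with h3 | h3
      · exact h3
      · exfalso
        rw [h3] at h1
        exact (Nat.not_even_iff_odd.mpr hoddpq) (even_iff_two_dvd.mpr h1)
    have hcH : cG h ∈ H := by
      rw [← QuotientGroup.eq_one_iff]
      have h1 : orderOf ((QuotientGroup.mk' H) (cG h)) ∣ q := by
        apply orderOf_dvd_of_pow_eq_one
        rw [← map_pow]
        have hcq : cG h ^ q = 1 := by rw [cG, ← map_pow, zq_pow h, map_one]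
        rw [hcq, map_one]
      have h2 : orderOf ((QuotientGroup.mk' H) (cG h)) ∣ 2 := by
        have h0 := orderOf_dvd_natCard ((QuotientGroup.mk' H) (cG h))
        rwa [← Subgroup.index_eq_card, hidx2] at h0
      rw [← orderOf_eq_one_iff]
      rcases (Nat.dvd_prime Nat.prime_two).mp h2 with h3 | h3
      · exact h3
      · exfalso
        rw [h3] at h1
        exact (Nat.not_even_iff_odd.mpr h.hoddq) (even_iff_two_dvd.mpr h1)
    by_cases hbH : bG h ∈ H
    · exact caseA haH hbH
    -- every element of H is a rotation
    have hHr : ∀ x : Gpq h, x ∈ H → ∃ l : ZMod (p * q), x.left = DihedralGroup.r l := by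
      intro x hx
      rcases hxl : x.left with l | l
      · exact ⟨l, rfl⟩
      · exfalso
        apply hbH
        have hz : SemidirectProduct.inr x.right ∈ H := by
          rw [inr_eq h]; exact pow_mem hcH _
        have h1 : SemidirectProduct.inl (DihedralGroup.sr l) ∈ H := by
          have h2 := H.mul_mem hx (H.inv_mem hz)
          have hxx : x = ⟨DihedralGroup.sr l, x.right⟩ := by
            apply SemidirectProduct.ext
            · exact hxl
            · rfl
          have h3 : x * (SemidirectProduct.inr x.right)⁻¹
              = SemidirectProduct.inl (DihedralGroup.sr l) := by
            rw [mul_inv_eq_iff_eq_mul, ← SemidirectProduct.mk_eq_inl_mul_inr]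
            exact hxx
          rwa [h3] at h2
        have h2 : SemidirectProduct.inl (DihedralGroup.r (-l)) ∈ H := by
          rw [inl_r_eq h]; exact pow_mem haH _
        have h3 := H.mul_mem h1 h2
        rw [← map_mul] at h3
        have h4 : DihedralGroup.sr l * DihedralGroup.r (-l) = DihedralGroup.sr 0 := by
          rw [DihedralGroup.sr_mul_r, add_neg_cancel]
        rw [h4] at h3
        exact h3
    -- the commutator g0 = [c,a] = a^(i-1)
    set g0 : Gpq h := SemidirectProduct.inl (DihedralGroup.r ((i : ZMod (p * q)) - 1)) with hg0def
    have hg0H : g0 ∈ H := by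
      rw [hg0def, ← comm_ca h]
      exact H.mul_mem (H.mul_mem (H.mul_mem hcH haH) (H.inv_mem hcH)) (H.inv_mem haH)
    set G0 : ↥H := ⟨g0, hg0H⟩ with hG0
    have hG0P : G0 ∈ P := by
      letI := hcyc
      letI : CommGroup (↥H ⧸ P) := IsCyclic.commGroup
      set C : ↥H := ⟨cG h, hcH⟩ with hC
      set A : ↥H := ⟨aG h, haH⟩ with hA
      have hcm : C * A * C⁻¹ * A⁻¹ ∈ P := by
        rw [← QuotientGroup.eq_one_iff]
        open scoped commutatorElement in show (QuotientGroup.mk' P) ⁅C, A⁆ = 1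
        rw [map_commutatorElement]
        exact commutatorElement_eq_one_iff_commute.mpr (Commute.all _ _)
      have he : C * A * C⁻¹ * A⁻¹ = G0 := by
        apply Subtype.ext
        show cG h * aG h * (cG h)⁻¹ * (aG h)⁻¹ = g0
        exact comm_ca h
      rwa [he] at hcm
    have hordg0 : orderOf g0 = p := orderOf_g0 h
    have hordG0 : orderOf G0 = p :=
      ((orderOf_injective H.subtype H.subtype_injective G0).symm).trans hordg0
    -- |P| = p
    have hpP : p ∣ ℓ ^ k := by
      have h0 := Subgroup.orderOf_dvd_natCard P hG0P
      rwa [hordG0, hPcard] at h0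
    have hℓp : ℓ = p :=
      ((Nat.prime_dvd_prime_iff_eq h.hp hℓ).mp (h.hp.dvd_of_dvd_pow hpP)).symm
    have hcardP : Nat.card P = p := by
      rw [hPcard, hℓp]
      have hPdvd : Nat.card ↥P ∣ Nat.card ↥H := Subgroup.card_subgroup_dvd_card P
      rw [hPcard, hℓp, hcardH] at hPdvd
      have hk1 : k = 1 := by
        rcases Nat.lt_or_ge k 1 with h1 | h1
        · exfalso
          interval_cases k
          rw [hℓp] at hPcard
          have := Subgroup.orderOf_dvd_natCard P hG0P
          rw [hordG0, hPcard, pow_zero] at this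
          have := Nat.le_of_dvd one_pos this
          have := h.hp.two_le
          omega
        · by_contra hk
          have h2 : k ≥ 2 := by omega
          have h3 : p ^ 2 ∣ p ^ k := pow_dvd_pow p h2
          have h4 : p ^ 2 ∣ (p * q) * q := h3.trans hPdvd
          have h5 : p ∣ q * q := by
            have h6 : p * p ∣ p * (q * q) := by
              rw [pow_two] at h4
              calc p * p ∣ (p * q) * q := h4
                _ = p * (q * q) := by ring
            exact (Nat.mul_dvd_mul_iff_left h.hp.pos).mp h6
          have h7 : p ∣ q := h.hp.dvd_of_dvd_pow (n := 2) (by rwa [pow_two])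
          exact hpq ((Nat.prime_dvd_prime_iff_eq h.hp h.hq).mp h7)
      rw [hk1, pow_one]
    -- Z = ⟨a^q⟩ and zpowers G0 = P
    have hordaq : orderOf (aG h ^ q) = p := by
      rw [orderOf_pow, horda, Nat.gcd_eq_right (dvd_mul_left q p), Nat.mul_div_cancel _ h.hq.pos]
    have hmemZ : ∀ t : ZMod (p * q),
        (SemidirectProduct.inl (DihedralGroup.r ((q : ZMod (p * q)) * t)) : Gpq h)
          ∈ Subgroup.zpowers (aG h ^ q) := by
      intro t
      rw [Subgroup.mem_zpowers_iff]
      refine ⟨(t.val : ℤ), ?_⟩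
      rw [zpow_natCast, ← pow_mul, aG_pow]
      congr 2
      push_cast
      rw [ZMod.natCast_val, ZMod.cast_id]
    have hg0Z : g0 ∈ Subgroup.zpowers (aG h ^ q) := by
      obtain ⟨s, hs⟩ := i_sub_one h
      rw [hg0def, hs]
      exact hmemZ s
    have hZg0 : Subgroup.zpowers g0 = Subgroup.zpowers (aG h ^ q) := by
      apply Subgroup.eq_of_le_of_card_ge (Subgroup.zpowers_le.mpr hg0Z)
      rw [Nat.card_zpowers, Nat.card_zpowers, hordg0, hordaq]
    have hZP : Subgroup.zpowers G0 = P := by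
      apply Subgroup.eq_of_le_of_card_ge (Subgroup.zpowers_le.mpr hG0P)
      rw [Nat.card_zpowers, hordG0, hcardP]
    -- every q-th power in H lies in P
    have hxq : ∀ x : ↥H, x ^ q ∈ P := by
      intro x
      obtain ⟨l, hl⟩ := hHr x.1 x.2
      have hx1 : (x : Gpq h) = ⟨DihedralGroup.r l, (x : Gpq h).right⟩ := by
        apply SemidirectProduct.ext
        · exact hl
        · rfl
      obtain ⟨t, ht⟩ := pow_q_inl h l (x : Gpq h).right
      have h5 : ((x ^ q : ↥H) : Gpq h)
          = SemidirectProduct.inl (DihedralGroup.r ((q : ZMod (p * q)) * t)) := by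
        rw [SubmonoidClass.coe_pow, hx1, ht]
      have h6 : (SemidirectProduct.inl (DihedralGroup.r ((q : ZMod (p * q)) * t)) : Gpq h)
          ∈ Subgroup.zpowers g0 := by
        rw [hZg0]; exact hmemZ t
      rw [← h5, Subgroup.mem_zpowers_iff] at h6
      obtain ⟨m, hm⟩ := h6
      rw [← hZP, Subgroup.mem_zpowers_iff]
      refine ⟨m, ?_⟩
      apply Subtype.ext
      rw [← hm]
      exact SubgroupClass.coe_zpow G0 m
    -- H/P has order q² but exponent q : contradiction with cyclicity
    have hcardQ : Nat.card (↥H ⧸ P) = q * q := by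
      have hh := Subgroup.card_eq_card_quotient_mul_card_subgroup P
      rw [hcardH, hcardP] at hh
      have h2 : (p * q) * q = ((q * q) * p) := by ring
      rw [h2] at hh
      have h3 : Nat.card (↥H ⧸ P) * p = (q * q) * p := by rw [← hh]
      exact Nat.eq_of_mul_eq_mul_right h.hp.pos h3
    letI := hcyc
    obtain ⟨g, hg⟩ := IsCyclic.exists_generator (α := ↥H ⧸ P)
    have hordg : orderOf g = q * q := by
      rw [orderOf_eq_card_of_forall_mem_zpowers hg, hcardQ]
    obtain ⟨x, hx⟩ := QuotientGroup.mk'_surjective P g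
    have hgq : g ^ q = 1 := by
      rw [← hx, ← map_pow]
      exact (QuotientGroup.eq_one_iff _).mpr (hxq x)
    have hdv : q * q ∣ q := by
      have h0 := orderOf_dvd_of_pow_eq_one hgq
      rwa [hordg] at h0
    have hle := Nat.le_of_dvd h.hq.pos hdv
    nlinarith [h.hq.two_le]
  · -- odd index : b ∈ H, then a ∈ H
    have hbH : bG h ∈ H := by
      rw [← QuotientGroup.eq_one_iff]
      have h1 : orderOf ((QuotientGroup.mk' H) (bG h)) ∣ 2 := by
        apply orderOf_dvd_of_pow_eq_one
        rw [← map_pow]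
        have hb2 : bG h ^ 2 = 1 := by
          rw [bG, ← map_pow, pow_two, DihedralGroup.sr_mul_sr, sub_zero]
          rfl
        rw [hb2, map_one]
      have h2 : orderOf ((QuotientGroup.mk' H) (bG h)) ∣ H.index := by
        have h0 := orderOf_dvd_natCard ((QuotientGroup.mk' H) (bG h))
        rwa [← Subgroup.index_eq_card] at h0
      rw [← orderOf_eq_one_iff]
      rcases (Nat.dvd_prime Nat.prime_two).mp h1 with h3 | h3
      · exact h3
      · exfalso
        rw [h3] at h2
        exact (Nat.not_even_iff_odd.mpr hodd) (even_iff_two_dvd.mpr h2)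
    have haH : aG h ∈ H := by
      have h2 : aG h ^ 2 ∈ H := by
        have h3 := H.mul_mem (hHn.conj_mem _ hbH (aG h)) (H.inv_mem hbH)
        rwa [show aG h * bG h * (aG h)⁻¹ * (bG h)⁻¹ = aG h ^ 2 from comm_ab h] at h3
      have hm : aG h = (aG h ^ 2) ^ ((p * q + 1) / 2) := by
        have ha1 : aG h ^ (p * q) = 1 := by
          have h0 := pow_orderOf_eq_one (aG h)
          rwa [horda] at h0
        rw [← pow_mul, hhalf, pow_succ, ha1, one_mul]
      rw [hm]
      exact pow_mem h2 _
    exact caseA haH hbH
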